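/- Let u : ℝ → ℝ be a differentiable function satisfying the differential inequality u'(s) ≤ −c − u(s)²/(n−1) for all s ∈ ℝ, where c ≥ 0 and n ≥ 2. Then u ≡ 0 and c = 0. In particular, there is no globally defined solution when c > 0. -/

import Mathlib

lemma stmt5_aux (n : ℕ) (hn : 2 ≤ n) (c : ℝ) (hc : 0 ≤ c) (u : ℝ → ℝ)
    (hu : Differentiable ℝ u)
    (hineq : ∀ s : ℝ, deriv u s ≤ -c - u s ^ 2 / ((n : ℝ) - 1)) :
    ∀ s, 0 ≤ u s := by
  have hn2 : (2:ℝ) ≤ (n:ℝ) := by exact_mod_cast hn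
  have hpos : (0:ℝ) < (n:ℝ) - 1 := by linarith
  have hanti : Antitone u := by
    apply antitone_of_deriv_nonpos hu
    intro s
    have h1 : 0 ≤ u s ^ 2 / ((n:ℝ) - 1) := div_nonneg (sq_nonneg _) hpos.le
    have := hineq s
    linarith
  by_contra h
  push_neg at h
  obtain ⟨s₀, hs₀⟩ := h
  have hneg : ∀ s ∈ Set.Ici s₀, u s < 0 := fun s hs =>
    lt_of_le_of_lt (hanti hs) hs₀
  have hne : ∀ s ∈ Set.Ici s₀, u s ≠ 0 := fun s hs => (hneg s hs).ne
  set g : ℝ → ℝ := fun s => s / ((n:ℝ) - 1) - (u s)⁻¹ with hg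
  have hganti : AntitoneOn g (Set.Ici s₀) := by
    apply antitoneOn_of_deriv_nonpos (convex_Ici s₀)
    · exact ContinuousOn.sub ((continuous_id.div_const _).continuousOn)
        (ContinuousOn.inv₀ hu.continuous.continuousOn hne)
    · intro x hx
      rw [interior_Ici] at hx
      have hxI : x ∈ Set.Ici s₀ := Set.mem_Ici.mpr (le_of_lt (Set.mem_Ioi.mp hx))
      simp only [hg]
      exact ((differentiableAt_id.div_const _).sub ((hu x).inv (hne x hxI))).differentiableWithinAt
    · intro x hx
      rw [interior_Ici] at hx
      have hxI : x ∈ Set.Ici s₀ := Set.mem_Ici.mpr (le_of_lt (Set.mem_Ioi.mp hx))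
      have hux : u x ≠ 0 := hne x hxI
      have h1 : HasDerivAt (fun s => s / ((n:ℝ) - 1)) (1 / ((n:ℝ)-1)) x := by
        simpa using (hasDerivAt_id x).div_const ((n:ℝ)-1)
      have h2 : HasDerivAt (fun s => (u s)⁻¹) (-(deriv u x) / (u x) ^ 2) x :=
        ((hu x).hasDerivAt).inv hux
      have hgd : deriv g x = 1 / ((n:ℝ)-1) - (-(deriv u x) / (u x) ^ 2) :=
        (h1.sub h2).deriv
      rw [hgd]
      have hsq : (0:ℝ) < (u x) ^ 2 := by positivity
      have hd : deriv u x ≤ -((u x) ^ 2 / ((n:ℝ) - 1)) := by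
        have h3 : 0 ≤ u x ^ 2 / ((n:ℝ) - 1) := div_nonneg (sq_nonneg _) hpos.le
        have := hineq x
        linarith
      have hdd : deriv u x / (u x) ^ 2 ≤ (-((u x) ^ 2 / ((n:ℝ) - 1))) / (u x) ^ 2 :=
        div_le_div_of_nonneg_right hd hsq.le
      have heq : (-((u x) ^ 2 / ((n:ℝ) - 1))) / (u x) ^ 2 = -(1 / ((n:ℝ)-1)) := by
        field_simp
      rw [heq] at hdd
      have hnd : -(deriv u x) / (u x) ^ 2 = -(deriv u x / (u x) ^ 2) := neg_div _ _
      rw [hnd]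
      linarith
  -- derive contradiction
  have hB : (u s₀)⁻¹ < 0 := inv_lt_zero.mpr hs₀
  set t : ℝ := s₀ + ((n:ℝ) - 1) * (-(u s₀)⁻¹ + 1) with ht
  have hts : s₀ ≤ t := by rw [ht]; nlinarith
  have key := hganti Set.self_mem_Ici hts hts
  simp only [hg] at key
  have hut : (u t)⁻¹ < 0 := inv_lt_zero.mpr (hneg t hts)
  have hdiff : t / ((n:ℝ)-1) - s₀ / ((n:ℝ)-1) = -(u s₀)⁻¹ + 1 := by
    rw [ht]; field_simp; ring
  linarith

/-- If `u : ℝ → ℝ` is differentiable and satisfies `u' ≤ −c − u²/(n−1)` everywhere with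
`c ≥ 0` and `n ≥ 2`, then `u ≡ 0` and `c = 0`. -/
theorem stmt5 (n : ℕ) (hn : 2 ≤ n) (c : ℝ) (hc : 0 ≤ c) (u : ℝ → ℝ)
    (hu : Differentiable ℝ u)
    (hineq : ∀ s : ℝ, deriv u s ≤ -c - u s ^ 2 / ((n : ℝ) - 1)) :
    (∀ s, u s = 0) ∧ c = 0 := by
  have h1 : ∀ s, 0 ≤ u s := stmt5_aux n hn c hc u hu hineq
  set v : ℝ → ℝ := fun s => -u (-s) with hv
  have hvd : ∀ s, HasDerivAt v (deriv u (-s)) s := by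
    intro s
    have h := ((hu (-s)).hasDerivAt.comp s (hasDerivAt_neg s)).neg
    have h2 : HasDerivAt v (-(deriv u (-s) * -1)) s := h
    rwa [show -(deriv u (-s) * -1) = deriv u (-s) by ring] at h2
  have hvdiff : Differentiable ℝ v := fun s => (hvd s).differentiableAt
  have h2 : ∀ s, 0 ≤ v s := by
    apply stmt5_aux n hn c hc v hvdiff
    intro s
    rw [(hvd s).deriv]
    have hsq : v s ^ 2 = u (-s) ^ 2 := by simp [hv]
    rw [hsq]
    exact hineq (-s)
  have huz : ∀ s, u s = 0 := by
    intro s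
    have h3 := h2 (-s)
    simp [hv] at h3
    linarith [h1 s]
  refine ⟨huz, ?_⟩
  have hu0 : u = fun _ => (0:ℝ) := funext huz
  have hd : deriv u 0 = 0 := by rw [hu0]; simp
  have h4 := hineq 0
  rw [hd, huz 0] at h4
  have hn2 : (2:ℝ) ≤ (n:ℝ) := by exact_mod_cast hn
  have h5 : (0:ℝ)^2 / ((n:ℝ)-1) = 0 := by simp
  rw [h5] at h4
  linarith
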